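/- Let n be a positive integer and let e_1,...,e_n be nonnegative integers with e_n = n!. Define g(m) = Σ_{k=1}^n e_k (m+1)^k m^{n-k}. Then every real root of the polynomial g lies in the half-open interval [-1, 0); that is, if g(x) = 0 for a real number x, then -1 ≤ x < 0. -/
import Mathlib


/-- if e₁,…,eₙ are nonnegative integers with eₙ = n!, then every real
root of g(x) = Σ_{k=1}^n e_k (x+1)^k x^{n-k} lies in [-1, 0). -/
theorem stmt0 (n : ℕ) (hn : 0 < n) (e : ℕ → ℕ) (he : e n = Nat.factorial n)
    (g : ℝ → ℝ)
    (hg : ∀ x : ℝ, g x = ∑ k ∈ Finset.Icc 1 n, (e k : ℝ) * (x + 1) ^ k * x ^ (n - k))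
    (x : ℝ) (hx : g x = 0) :
    -1 ≤ x ∧ x < 0 := by
  have hfac : (0 : ℝ) < (Nat.factorial n : ℝ) := by exact_mod_cast Nat.factorial_pos n
  have hmem : n ∈ Finset.Icc 1 n := Finset.mem_Icc.mpr ⟨hn, le_refl n⟩
  constructor
  · by_contra h
    push_neg at h
    have h1 : (0 : ℝ) < -(x + 1) := by linarith
    have h2 : (0 : ℝ) < -x := by linarith
    have key : (0 : ℝ) < ∑ k ∈ Finset.Icc 1 n,
        (e k : ℝ) * (-(x + 1)) ^ k * (-x) ^ (n - k) := by
      apply Finset.sum_pos'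
      · intro i _
        have := (e i).cast_nonneg (α := ℝ)
        positivity
      · refine ⟨n, hmem, ?_⟩
        rw [he]
        positivity
    have heq : ∑ k ∈ Finset.Icc 1 n, (e k : ℝ) * (-(x + 1)) ^ k * (-x) ^ (n - k)
        = (-1 : ℝ) ^ n * g x := by
      rw [hg, Finset.mul_sum]
      apply Finset.sum_congr rfl
      intro k hk
      obtain ⟨hk1, hk2⟩ := Finset.mem_Icc.mp hk
      have hpow : ((-1 : ℝ)) ^ k * ((-1 : ℝ)) ^ (n - k) = (-1 : ℝ) ^ n := by
        rw [← pow_add]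
        congr 1
        omega
      calc (e k : ℝ) * (-(x + 1)) ^ k * (-x) ^ (n - k)
          = ((-1 : ℝ) ^ k * (-1 : ℝ) ^ (n - k)) * ((e k : ℝ) * (x + 1) ^ k * x ^ (n - k)) := by
            rw [neg_pow, neg_pow]; ring
        _ = (-1 : ℝ) ^ n * ((e k : ℝ) * (x + 1) ^ k * x ^ (n - k)) := by rw [hpow]
    rw [hx, mul_zero] at heq
    linarith
  · by_contra h
    push_neg at h
    have key : (0 : ℝ) < ∑ k ∈ Finset.Icc 1 n,
        (e k : ℝ) * (x + 1) ^ k * x ^ (n - k) := by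
      apply Finset.sum_pos'
      · intro i _
        have h1 : (0 : ℝ) ≤ x + 1 := by linarith
        have := (e i).cast_nonneg (α := ℝ)
        positivity
      · refine ⟨n, hmem, ?_⟩
        rw [he, Nat.sub_self, pow_zero, mul_one]
        have h1 : (0 : ℝ) < x + 1 := by linarith
        positivity
    rw [← hg, hx] at key
    exact lt_irrefl 0 key
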